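/- Let K be an algebraically closed field of characteristic ≠ 2, and let X ⊂ G(1, P^4) be the closure of the image of the map A² → G(1, P^4) sending (z¹, z²) to the line spanned by the rows of the matrix [[1, 0, z¹, z², 2z¹z²], [0, 1, 0, z¹, (z¹)²]]. Then the union of these lines, i.e., the image of the universal family U_X under projection to P^4, is the closure of the image of A³ → P^4, (z¹, z², η) ↦ (1 : η : z¹ : z² + ηz¹ : 2z¹z² + η(z¹)²), which is the hypersurface in P^4 defined by (Z⁰)²Z⁴ + Z¹(Z²)² − 2Z⁰Z²Z³ = 0 (the twisted plane). -/

import Mathlib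

open MvPolynomial

private theorem prime_X1_aux (K : Type*) [Field K] :
    Prime (X 1 : MvPolynomial (Fin 4) K) := by
  let e2 : MvPolynomial (Fin 4) K ≃ₐ[K] Polynomial (MvPolynomial (Fin 3) K) :=
    (MvPolynomial.renameEquiv K (Equiv.swap (0:Fin 4) 1)).trans (MvPolynomial.finSuccEquiv K 3)
  rw [← MulEquiv.prime_iff e2.toMulEquiv]
  show Prime (e2 (X 1))
  have h : e2 (X 1) = Polynomial.X := by
    simp only [e2, AlgEquiv.trans_apply, renameEquiv_apply, rename_X,
      show (Equiv.swap (0:Fin 4) 1) 1 = 0 by decide, finSuccEquiv_X_zero]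
  rw [h]; exact Polynomial.prime_X

private theorem irred_aux (K : Type*) [Field K] :
    Irreducible ((X 0) ^ 2 * X 4 + X 1 * (X 2) ^ 2
      - 2 * (X 0 * X 2 * X 3) : MvPolynomial (Fin 5) K) := by
  set R := MvPolynomial (Fin 4) K
  set a : R := (X 1)^2 with ha_def
  set b : R := (X 0)^2 * X 3 - 2 * (X 0 * X 1 * X 2) with hb_def
  set p : Polynomial R := Polynomial.C a * Polynomial.X + Polynomial.C b with hp_def
  set e := (MvPolynomial.renameEquiv K (Equiv.swap (0:Fin 5) 1)).trans
    (MvPolynomial.finSuccEquiv K 4) with he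
  have hmap : e ((X 0) ^ 2 * X 4 + X 1 * (X 2) ^ 2
      - 2 * (X 0 * X 2 * X 3) : MvPolynomial (Fin 5) K) = p := by
    have h0 : (Equiv.swap (0:Fin 5) 1) 0 = 1 := by decide
    have h1 : (Equiv.swap (0:Fin 5) 1) 1 = 0 := by decide
    have h2 : (Equiv.swap (0:Fin 5) 1) 2 = 2 := by decide
    have h3 : (Equiv.swap (0:Fin 5) 1) 3 = 3 := by decide
    have h4 : (Equiv.swap (0:Fin 5) 1) 4 = 4 := by decide
    simp only [he, AlgEquiv.trans_apply, map_add, map_sub, map_mul, map_pow, map_ofNat,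
      renameEquiv_apply, rename_X, h0, h1, h2, h3, h4]
    have e1 : (finSuccEquiv K 4) (X (1:Fin 5)) = Polynomial.C (X 0) := by
      rw [show (1:Fin 5) = Fin.succ 0 from rfl, finSuccEquiv_X_succ]
    have e2 : (finSuccEquiv K 4) (X (2:Fin 5)) = Polynomial.C (X 1) := by
      rw [show (2:Fin 5) = Fin.succ 1 from rfl, finSuccEquiv_X_succ]
    have e3 : (finSuccEquiv K 4) (X (3:Fin 5)) = Polynomial.C (X 2) := by
      rw [show (3:Fin 5) = Fin.succ 2 from rfl, finSuccEquiv_X_succ]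
    have e4 : (finSuccEquiv K 4) (X (4:Fin 5)) = Polynomial.C (X 3) := by
      rw [show (4:Fin 5) = Fin.succ 3 from rfl, finSuccEquiv_X_succ]
    rw [finSuccEquiv_X_zero, e1, e2, e3, e4, hp_def, ha_def, hb_def]
    simp only [map_sub, map_mul, map_pow, map_ofNat]
    ring
  rw [← MulEquiv.irreducible_iff e.toMulEquiv]
  show Irreducible (e _)
  rw [hmap]
  have ha : a ≠ 0 := pow_ne_zero _ (X_ne_zero 1)
  have hX1b : ¬ (X 1 : R) ∣ b := by
    intro hdvd
    have h1 : (aeval (fun i => if i = 1 then 0 else X i) :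
        MvPolynomial (Fin 4) K →ₐ[K] MvPolynomial (Fin 4) K) (X 1) = 0 := by simp
    have h2 : (aeval (fun i => if i = 1 then 0 else X i) :
        MvPolynomial (Fin 4) K →ₐ[K] MvPolynomial (Fin 4) K) b = (X 0)^2 * X 3 := by
      rw [hb_def]; simp
    have h3 := map_dvd (aeval (fun i => if i = 1 then 0 else X i) :
        MvPolynomial (Fin 4) K →ₐ[K] MvPolynomial (Fin 4) K) hdvd
    rw [h1, h2, zero_dvd_iff] at h3
    exact mul_ne_zero (pow_ne_zero _ (X_ne_zero 0)) (X_ne_zero 3) h3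
  have hX1prime : Prime (X 1 : R) := prime_X1_aux K
  have hprim : p.IsPrimitive := by
    intro r hr
    by_contra hru
    have hra : r ∣ a := by
      have := (Polynomial.C_dvd_iff_dvd_coeff r p).mp hr 1
      simpa [hp_def] using this
    have hrb : r ∣ b := by
      have := (Polynomial.C_dvd_iff_dvd_coeff r p).mp hr 0
      simpa [hp_def] using this
    have hr0 : r ≠ 0 := fun h => ha (by simpa [h] using hra)
    obtain ⟨q, hqirr, hqr⟩ := WfDvdMonoid.exists_irreducible_factor hru hr0
    have hqa : q ∣ (X 1 : R) := by
      have hq2 : q ∣ (X 1 : R) * X 1 := by rw [← sq]; exact hqr.trans hra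
      rcases (UniqueFactorizationMonoid.irreducible_iff_prime.mp hqirr).2.2 _ _ hq2 with h | h <;>
        exact h
    have hX1q : (X 1 : R) ∣ q := hqirr.dvd_symm hX1prime.irreducible hqa
    exact hX1b (hX1q.trans (hqr.trans hrb))
  have hirr : Irreducible (p.map (algebraMap R (FractionRing R))) := by
    apply Polynomial.irreducible_of_degree_eq_one
    rw [Polynomial.degree_map_eq_of_injective (IsFractionRing.injective R (FractionRing R))]
    exact Polynomial.degree_linear ha
  exact hprim.irreducible_of_irreducible_map_of_injective
    (IsFractionRing.injective R (FractionRing R)) hirr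

/-- (Example 2.6 (i),(iii),(iv): the twisted plane.)  Let `K` be an
algebraically closed field of characteristic `≠ 2`.  The union of the lines of the family
`X ⊂ G(1, P^4)` parametrized by the rows `(1,0,z¹,z²,2z¹z²)`, `(0,1,0,z¹,(z¹)²)` is the
closure of the image of `(z¹,z²,η) ↦ (1 : η : z¹ : z² + ηz¹ : 2z¹z² + η(z¹)²)`, which is
the hypersurface `(Z⁰)²Z⁴ + Z¹(Z²)² − 2Z⁰Z²Z³ = 0`.  Verifiable content: the cubic
vanishes identically on the parametrization, and the cubic is irreducible (so the Zariski
closure of the image is exactly this hypersurface). -/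
theorem stmt17 (K : Type*) [Field K] [IsAlgClosed K] (h2 : (2 : K) ≠ 0) :
    (∀ z₁ z₂ η : K,
      MvPolynomial.eval
        (![1, η, z₁, z₂ + η * z₁, 2 * z₁ * z₂ + η * z₁ ^ 2] : Fin 5 → K)
        ((X 0) ^ 2 * X 4 + X 1 * (X 2) ^ 2
          - 2 * (X 0 * X 2 * X 3) : MvPolynomial (Fin 5) K) = 0) ∧
    Irreducible ((X 0) ^ 2 * X 4 + X 1 * (X 2) ^ 2
      - 2 * (X 0 * X 2 * X 3) : MvPolynomial (Fin 5) K) := by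
  constructor
  · intro z₁ z₂ η
    simp
    ring
  · exact irred_aux K
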